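/- Let (V,g) be an n-dimensional (n ≥ 4) real vector space with a nondegenerate symmetric bilinear form g. Suppose R is a generalized curvature tensor on V (with Ricci contraction S := Ric(R), S² the g-square of S, and κ := tr(S)) satisfying R = (α₂/2)·S∧S + α₃·g∧S + α₄·g∧S² + (α₅/2)·g∧g for real numbers α₂,…,α₅. Then the Weyl tensor C := R − (1/(n−2))·g∧S + (κ/(2(n−2)(n−1)))·g∧g equals (α₂/(n−2))·E, where E = g∧S² + ((n−2)/2)·S∧S − κ·g∧S + ((κ² − tr(S²))/(2(n−1)))·g∧g. -/

import Mathlib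

variable {V : Type*} [AddCommGroup V] [Module ℝ V]

/-- Kulkarni–Nomizu product of two (0,2)-tensors. -/
def kn (A B : V → V → ℝ) : V → V → V → V → ℝ := fun x1 x2 x3 x4 =>
  A x1 x4 * B x2 x3 + A x2 x3 * B x1 x4 - A x1 x3 * B x2 x4 - A x2 x4 * B x1 x3

/-- The endomorphism `(X ∧_A Y)Z = A(Y,Z)X − A(X,Z)Y`. -/
def wedgeV (A : V → V → ℝ) (x y z : V) : V := A y z • x - A x z • y

/-- Tachibana tensor `Q(A,T)` of a (0,2)-tensor `A` and a (0,4)-tensor `T`. -/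
def Q4 (A : V → V → ℝ) (T : V → V → V → V → ℝ) : V → V → V → V → V → V → ℝ :=
  fun x1 x2 x3 x4 x y =>
    -(T (wedgeV A x y x1) x2 x3 x4) - T x1 (wedgeV A x y x2) x3 x4
      - T x1 x2 (wedgeV A x y x3) x4 - T x1 x2 x3 (wedgeV A x y x4)

/-- A generalized curvature tensor: skew in the first and last pairs, symmetric under
pair interchange, and satisfying the first Bianchi identity. -/
def IsGenCurv (R : V → V → V → V → ℝ) : Prop :=
  (∀ x₁ x₂ x₃ x₄, R x₂ x₁ x₃ x₄ = - R x₁ x₂ x₃ x₄) ∧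
  (∀ x₁ x₂ x₃ x₄, R x₁ x₂ x₄ x₃ = - R x₁ x₂ x₃ x₄) ∧
  (∀ x₁ x₂ x₃ x₄, R x₁ x₂ x₃ x₄ = R x₃ x₄ x₁ x₂) ∧
  (∀ x₁ x₂ x₃ x₄, R x₁ x₂ x₃ x₄ + R x₂ x₃ x₁ x₄ + R x₃ x₁ x₂ x₄ = 0)

/-- if a generalized curvature tensor `R` satisfies
`R = (α₂/2)·S∧S + α₃·g∧S + α₄·g∧S² + (α₅/2)·g∧g` with `S = Ric(R)`,
then its Weyl tensor equals `(α₂/(n−2))·E`. -/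
theorem stmt_13 {V : Type*} [AddCommGroup V] [Module ℝ V] [FiniteDimensional ℝ V]
    (n : ℕ) (hn4 : 4 ≤ n) (hdim : Module.finrank ℝ V = n)
    (g : V →ₗ[ℝ] V →ₗ[ℝ] ℝ)
    (hg : ∀ x y, g x y = g y x)
    (hgnd : ∀ x : V, (∀ y : V, g x y = 0) → x = 0)
    (e : Module.Basis (Fin n) ℝ V) (ε : Fin n → ℝ) (hε : ∀ i, ε i = 1 ∨ ε i = -1)
    (horth : ∀ i j, g (e i) (e j) = if i = j then ε i else 0)
    (R : V → V → V → V → ℝ) (hRcurv : IsGenCurv R)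
    (S : V → V → ℝ) (hS : ∀ x y, S x y = ∑ i, ε i * R (e i) x y (e i))
    (s : V →ₗ[ℝ] V) (hs : ∀ x y, g (s x) y = S x y)
    (α₂ α₃ α₄ α₅ : ℝ)
    (hR : ∀ x₁ x₂ x₃ x₄ : V,
      R x₁ x₂ x₃ x₄
        = (α₂ / 2) * kn S S x₁ x₂ x₃ x₄
          + α₃ * kn (fun u v => g u v) S x₁ x₂ x₃ x₄
          + α₄ * kn (fun u v => g u v) (fun u v => S (s u) v) x₁ x₂ x₃ x₄
          + (α₅ / 2) * kn (fun u v => g u v) (fun u v => g u v) x₁ x₂ x₃ x₄) :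
    ∀ x₁ x₂ x₃ x₄ : V,
      R x₁ x₂ x₃ x₄
          - (1 / ((n : ℝ) - 2)) * kn (fun u v => g u v) S x₁ x₂ x₃ x₄
          + (LinearMap.trace ℝ V s / (2 * ((n : ℝ) - 2) * ((n : ℝ) - 1)))
              * kn (fun u v => g u v) (fun u v => g u v) x₁ x₂ x₃ x₄
        = (α₂ / ((n : ℝ) - 2))
            * (kn (fun u v => g u v) (fun u v => S (s u) v) x₁ x₂ x₃ x₄
                + (((n : ℝ) - 2) / 2) * kn S S x₁ x₂ x₃ x₄
                - LinearMap.trace ℝ V s * kn (fun u v => g u v) S x₁ x₂ x₃ x₄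
                + (((LinearMap.trace ℝ V s) ^ 2 - LinearMap.trace ℝ V (s ∘ₗ s))
                      / (2 * ((n : ℝ) - 1)))
                    * kn (fun u v => g u v) (fun u v => g u v) x₁ x₂ x₃ x₄) := by
  have h4 : (4:ℝ) ≤ (n:ℝ) := by exact_mod_cast hn4
  have hne2 : ((n:ℝ) - 2) ≠ 0 := fun h => by linarith
  have hne1 : ((n:ℝ) - 1) ≠ 0 := fun h => by linarith
  obtain ⟨hsk1, hsk2, hpair, hbianchi⟩ := hRcurv
  have hε2 : ∀ i, ε i * ε i = 1 := by intro i; rcases hε i with h | h <;> rw [h] <;> norm_num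
  have hSsym : ∀ x y, S x y = S y x := by
    intro x y
    rw [hS, hS]
    refine Finset.sum_congr rfl fun i _ => ?_
    have h1 := hpair (e i) x y (e i)
    have h2 := hsk1 (e i) y (e i) x
    have h3 := hsk2 (e i) y x (e i)
    linear_combination (ε i) * h1 + (ε i) * h2 - (ε i) * h3
  have hsa : ∀ a b, g (s a) b = g a (s b) := by
    intro a b
    rw [hs, hSsym, ← hs, hg]
  have hS2sym : ∀ a b, S (s a) b = S (s b) a := by
    intro a b
    rw [← hs (s a) b, ← hs (s b) a, hsa (s a) b, hsa (s b) a]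
    exact hg _ _
  have hge : ∀ (z : V) (i : Fin n), g z (e i) = ε i * e.repr z i := by
    intro z i
    conv_lhs => rw [← e.sum_repr z]
    simp only [map_sum, LinearMap.sum_apply, map_smul, LinearMap.smul_apply, smul_eq_mul,
      horth, mul_ite, mul_zero, Finset.sum_ite_eq', Finset.mem_univ, if_true]
    ring
  have hlin : ∀ (z w : V), ∑ i, e.repr z i * g (e i) w = g z w := by
    intro z w
    conv_rhs => rw [← e.sum_repr z]
    simp only [map_sum, LinearMap.sum_apply, map_smul, LinearMap.smul_apply, smul_eq_mul]
  have hGsum : ∀ a b : V, ∑ i, ε i * (g a (e i) * g b (e i)) = g a b := by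
    intro a b
    calc ∑ i, ε i * (g a (e i) * g b (e i)) = ∑ i, e.repr a i * g (e i) b := by
          refine Finset.sum_congr rfl fun i _ => ?_
          rw [hge a i, hg b (e i)]
          rcases hε i with h | h <;> rw [h] <;> ring
      _ = g a b := hlin a b
  have hDsum : ∀ a b : V, ∑ i, ε i * (g a (e i) * S b (e i)) = S a b := by
    intro a b
    calc ∑ i, ε i * (g a (e i) * S b (e i))
        = ∑ i, ε i * (g a (e i) * g (s b) (e i)) := by
          refine Finset.sum_congr rfl fun i _ => ?_
          rw [hs]
      _ = g a (s b) := hGsum a (s b)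
      _ = S a b := by rw [← hsa, hs]
  have hBsum : ∀ a b : V, ∑ i, ε i * (S a (e i) * S b (e i)) = S (s a) b := by
    intro a b
    calc ∑ i, ε i * (S a (e i) * S b (e i))
        = ∑ i, ε i * (g (s a) (e i) * g (s b) (e i)) := by
          refine Finset.sum_congr rfl fun i _ => ?_
          rw [hs, hs]
      _ = g (s a) (s b) := hGsum _ _
      _ = S (s a) b := by rw [← hsa (s a) b, hs]
  have hCsum : ∑ i, ε i * g (e i) (e i) = (n:ℝ) := by
    have : ∀ i ∈ (Finset.univ : Finset (Fin n)), ε i * g (e i) (e i) = 1 := by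
      intro i _
      rw [horth i i, if_pos rfl, hε2 i]
    rw [Finset.sum_congr rfl this]
    simp
  have hksum : ∑ i, ε i * S (e i) (e i) = LinearMap.trace ℝ V s := by
    rw [LinearMap.trace_eq_matrix_trace ℝ e s]
    simp only [Matrix.trace, Matrix.diag, LinearMap.toMatrix_apply]
    refine Finset.sum_congr rfl fun i _ => ?_
    have h := hge (s (e i)) i
    rw [hs] at h
    linear_combination (ε i) * h + (e.repr (s (e i)) i) * hε2 i
  have htsum : ∑ i, ε i * S (s (e i)) (e i) = LinearMap.trace ℝ V (s ∘ₗ s) := by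
    rw [LinearMap.trace_eq_matrix_trace ℝ e (s ∘ₗ s)]
    simp only [Matrix.trace, Matrix.diag, LinearMap.toMatrix_apply, LinearMap.comp_apply]
    refine Finset.sum_congr rfl fun i _ => ?_
    have h := hge (s (s (e i))) i
    rw [hs] at h
    linear_combination (ε i) * h + (e.repr (s (s (e i))) i) * hε2 i
  have hA : ∀ x y : V, S x y =
      α₂ * (LinearMap.trace ℝ V s * S x y - S (s x) y)
      + α₃ * (((n:ℝ) - 2) * S x y + LinearMap.trace ℝ V s * g x y)
      + α₄ * (((n:ℝ) - 2) * S (s x) y + LinearMap.trace ℝ V (s ∘ₗ s) * g x y)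
      + α₅ * (((n:ℝ) - 1) * g x y) := by
    intro x y
    conv_lhs => rw [hS x y]
    have step : ∀ i ∈ (Finset.univ : Finset (Fin n)), ε i * R (e i) x y (e i) =
        α₂ * (S x y * (ε i * S (e i) (e i))) - α₂ * (ε i * (S x (e i) * S y (e i)))
        + α₃ * (S x y * (ε i * g (e i) (e i))) + α₃ * (g x y * (ε i * S (e i) (e i)))
        - α₃ * (ε i * (g y (e i) * S x (e i))) - α₃ * (ε i * (g x (e i) * S y (e i)))
        + α₄ * (S (s x) y * (ε i * g (e i) (e i))) + α₄ * (g x y * (ε i * S (s (e i)) (e i)))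
        - α₄ * (ε i * (g y (e i) * S (s x) (e i))) - α₄ * (ε i * (g x (e i) * S (s y) (e i)))
        + α₅ * (g x y * (ε i * g (e i) (e i))) - α₅ * (ε i * (g x (e i) * g y (e i))) := by
      intro i _
      rw [hR]
      simp only [kn]
      rw [hg (e i) y, hSsym (e i) y, hS2sym (e i) y]
      ring
    rw [Finset.sum_congr rfl step]
    simp only [Finset.sum_add_distrib, Finset.sum_sub_distrib, ← Finset.mul_sum]
    linear_combination (α₂ * S x y + α₃ * g x y) * hksum
      + (α₃ * S x y + α₄ * S (s x) y + α₅ * g x y) * hCsum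
      + (α₄ * g x y) * htsum
      - α₂ * hBsum x y
      - α₃ * hDsum y x - α₃ * hDsum x y - α₃ * hSsym y x
      - α₄ * hDsum y (s x) - α₄ * hSsym y (s x)
      - α₄ * hDsum x (s y) - α₄ * hSsym x (s y) - α₄ * hS2sym y x
      - α₅ * hGsum x y
  have hB : LinearMap.trace ℝ V s =
      α₂ * ((LinearMap.trace ℝ V s)^2 - LinearMap.trace ℝ V (s ∘ₗ s))
      + α₃ * (2 * ((n:ℝ) - 1) * LinearMap.trace ℝ V s)
      + α₄ * (2 * ((n:ℝ) - 1) * LinearMap.trace ℝ V (s ∘ₗ s))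
      + α₅ * ((n:ℝ) * ((n:ℝ) - 1)) := by
    have step : ∀ i ∈ (Finset.univ : Finset (Fin n)), ε i * S (e i) (e i) =
        α₂ * (LinearMap.trace ℝ V s * (ε i * S (e i) (e i)) - ε i * S (s (e i)) (e i))
        + α₃ * (((n:ℝ) - 2) * (ε i * S (e i) (e i)) + LinearMap.trace ℝ V s * (ε i * g (e i) (e i)))
        + α₄ * (((n:ℝ) - 2) * (ε i * S (s (e i)) (e i)) + LinearMap.trace ℝ V (s ∘ₗ s) * (ε i * g (e i) (e i)))
        + α₅ * (((n:ℝ) - 1) * (ε i * g (e i) (e i))) := by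
      intro i _
      linear_combination (ε i) * hA (e i) (e i)
    conv_lhs => rw [← hksum]
    rw [Finset.sum_congr rfl step]
    simp only [Finset.sum_add_distrib, Finset.sum_sub_distrib, ← Finset.mul_sum]
    linear_combination (α₂ * LinearMap.trace ℝ V s + α₃ * ((n:ℝ) - 2)) * hksum
      + (α₄ * ((n:ℝ) - 2) - α₂) * htsum
      + (α₃ * LinearMap.trace ℝ V s + α₄ * LinearMap.trace ℝ V (s ∘ₗ s) + α₅ * ((n:ℝ) - 1)) * hCsum
  have hP : ∀ x y : V,
      (α₃ - 1/((n:ℝ)-2) + α₂ * LinearMap.trace ℝ V s /((n:ℝ)-2)) * S x y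
      + (α₄ - α₂/((n:ℝ)-2)) * S (s x) y
      + (α₅/2 + LinearMap.trace ℝ V s/(2*((n:ℝ)-2)*((n:ℝ)-1))
          - α₂/((n:ℝ)-2) * (((LinearMap.trace ℝ V s)^2 - LinearMap.trace ℝ V (s ∘ₗ s))/(2*((n:ℝ)-1)))) * g x y
      = 0 := by
    intro x y
    have h := hA x y
    field_simp
    linear_combination (-(2*((n:ℝ)-1))) * h + (g x y) * hB
  intro x₁ x₂ x₃ x₄
  have hR' := hR x₁ x₂ x₃ x₄
  simp only [kn] at hR' ⊢
  have hinv2 : ((n:ℝ)-2) * ((n:ℝ)-2)⁻¹ = 1 := mul_inv_cancel₀ hne2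
  linear_combination hR' + g x₁ x₄ * hP x₂ x₃ + g x₂ x₃ * hP x₁ x₄
    - g x₁ x₃ * hP x₂ x₄ - g x₂ x₄ * hP x₁ x₃
    - (α₂/2 * (S x₁ x₄ * S x₂ x₃ + S x₂ x₃ * S x₁ x₄ - S x₁ x₃ * S x₂ x₄ - S x₂ x₄ * S x₁ x₃)) * hinv2
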